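/- (Theorem 1, σ = 0 case: distributional Pollaczek–Khinchine formula.) Suppose 0 < ν̄ < c and σ = 0, and set ρ = ν̄/c. Let G be the probability measure on (0,∞) with density x ↦ ν((x,∞))/ν̄, and define the probability measure W = Σ_{n=0}^∞ (1 − ρ) ρⁿ G^{∗n}, i.e. the law of Σ_{n=1}^N Y_n where N is geometric with P[N = n] = (1 − ρ)ρⁿ, the Y_i have law G, and all are independent. Then for every α > 0, ∫ e^{−αx} W(dx) = α(c − ν̄)/φ(α). -/

import Mathlib

open MeasureTheory Set Real

/-- The `n`-fold convolution power of a measure on `ℝ`, with `G^{∗0} = δ₀`. -/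
noncomputable def convPow (G : Measure ℝ) : ℕ → Measure ℝ
  | 0 => Measure.dirac 0
  | n + 1 => Measure.conv (convPow G n) G

lemma prob_convPow (G : Measure ℝ) [IsProbabilityMeasure G] (n : ℕ) :
    IsProbabilityMeasure (convPow G n) := by
  induction n with
  | zero => exact Measure.dirac.isProbabilityMeasure
  | succ n ih => exact Measure.probabilitymeasure_of_probabilitymeasures_conv _ _

lemma lap_conv (α : ℝ) (μ ν : Measure ℝ) [SFinite μ] [SFinite ν] :
    ∫⁻ x, ENNReal.ofReal (Real.exp (-(α*x))) ∂(μ.conv ν)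
      = (∫⁻ x, ENNReal.ofReal (Real.exp (-(α*x))) ∂μ)
        * (∫⁻ x, ENNReal.ofReal (Real.exp (-(α*x))) ∂ν) := by
  rw [Measure.conv, lintegral_map (by fun_prop) measurable_add]
  rw [← MeasureTheory.lintegral_prod_mul (by fun_prop) (by fun_prop)]
  congr 1
  ext p
  rw [← ENNReal.ofReal_mul (le_of_lt (Real.exp_pos _)), ← Real.exp_add]
  ring_nf

lemma lap_convPow (α : ℝ) (G : Measure ℝ) [IsProbabilityMeasure G] (n : ℕ) :
    ∫⁻ x, ENNReal.ofReal (Real.exp (-(α*x))) ∂(convPow G n)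
      = (∫⁻ x, ENNReal.ofReal (Real.exp (-(α*x))) ∂G) ^ n := by
  induction n with
  | zero => simp [convPow, lintegral_dirac' _
      (by fun_prop : Measurable fun x : ℝ => ENNReal.ofReal (Real.exp (-(α*x))))]
  | succ n ih =>
      have := prob_convPow G n
      rw [convPow, lap_conv, ih, pow_succ]

lemma expint (α : ℝ) (hα : 0 < α) (y : ℝ) :
    ∫ t in (0:ℝ)..y, Real.exp (-(α*t)) = (1 - Real.exp (-(α*y)))/α := by
  have hα' : α ≠ 0 := ne_of_gt hα
  have h : ∀ t : ℝ, Real.exp (-(α*t)) = Real.exp ((-α)*t) := fun t => by ring_nf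
  simp_rw [h]
  rw [intervalIntegral.integral_comp_mul_left (fun x => Real.exp x) (by linarith : (-α) ≠ 0),
    mul_zero, integral_exp, smul_eq_mul, Real.exp_zero]
  rw [inv_neg, eq_div_iff hα', ← h y]
  have h2 : α⁻¹ * α = 1 := inv_mul_cancel₀ hα'
  linear_combination (1 - Real.exp (-(α*y))) * h2

lemma tail_lintegral (ν : Measure ℝ) (g : ℝ → ℝ) (hg : Continuous g) (hgnn : ∀ t, 0 ≤ g t) :
    ∫⁻ x in Ioi (0:ℝ), ν (Ioi x) * ENNReal.ofReal (g x)
      = ∫⁻ y, ENNReal.ofReal (∫ t in (0:ℝ)..y, g t) ∂(ν.restrict (Ioi 0)) := by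
  have key := lintegral_comp_eq_lintegral_meas_lt_mul (ν.restrict (Ioi 0))
    (f := fun y => y)
    (Filter.Eventually.mono (ae_restrict_mem measurableSet_Ioi) fun x hx => le_of_lt hx)
    aemeasurable_id (fun t _ => hg.intervalIntegrable 0 t)
    (Filter.Eventually.of_forall fun t => hgnn t)
  rw [key]
  rw [← lintegral_indicator measurableSet_Ioi, ← lintegral_indicator measurableSet_Ioi]
  congr 1
  ext t
  by_cases ht : t ∈ Ioi (0:ℝ)
  · rw [Set.indicator_of_mem ht, Set.indicator_of_mem ht]
    have h2 : {a : ℝ | t < a} = Ioi t := rfl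
    rw [h2, Measure.restrict_apply measurableSet_Ioi,
      Set.inter_eq_left.2 (Ioi_subset_Ioi (le_of_lt ht))]
  · rw [Set.indicator_of_notMem ht, Set.indicator_of_notMem ht]

set_option maxHeartbeats 1000000 in
/-- **Theorem 1, `σ = 0` case: distributional Pollaczek–Khinchine
formula.** Suppose `0 < ν̄ < c` and `σ = 0`, and set `ρ = ν̄/c`. Let `G` be the
probability measure on `(0,∞)` with density `x ↦ ν((x,∞))/ν̄` and
`W = Σ_{n=0}^∞ (1 − ρ) ρⁿ G^{∗n}`, i.e. the law of `Σ_{n=1}^N Yₙ` with `N`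
geometric`(1 − ρ)`, `Yᵢ ∼ G`, all independent. Then for every `α > 0`,
`∫ e^{−αx} W(dx) = α(c − ν̄)/φ(α)`, where `φ(α) = cα − ∫_{(0,∞)} (1 − e^{−αx}) ν(dx)`. -/
theorem stmt10 (ν : Measure ℝ) (hν : ν (Iic 0) = 0)
    (hint : IntegrableOn (fun x => x) (Ioi 0) ν)
    (νbar : ℝ) (hνbar : νbar = ∫ x in Ioi (0:ℝ), x ∂ν)
    (c : ℝ) (hc : 0 < c)
    (h0 : 0 < νbar) (h1 : νbar < c)
    (φ : ℝ → ℝ)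
    (hφ : ∀ α : ℝ, φ α = c * α
        - ∫ x in Ioi (0:ℝ), (1 - Real.exp (-(α * x))) ∂ν)
    (ρ : ℝ) (hρ : ρ = νbar / c)
    (G : Measure ℝ)
    (hG : G = volume.withDensity
        (fun x => if 0 < x then ν (Ioi x) / ENNReal.ofReal νbar else 0))
    (W : Measure ℝ)
    (hW : W = Measure.sum
        (fun n : ℕ => (ENNReal.ofReal ((1 - ρ) * ρ ^ n)) • convPow G n)) :
    ∀ α : ℝ, 0 < α →
      ∫ x, Real.exp (-(α * x)) ∂W = α * (c - νbar) / φ α := by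
  intro α hα
  have hα' : α ≠ 0 := ne_of_gt hα
  have hc' : c ≠ 0 := ne_of_gt hc
  have hνb' : νbar ≠ 0 := ne_of_gt h0
  -- measurability of the tail function
  have mtail : Measurable fun x : ℝ => ν (Ioi x) :=
    Antitone.measurable (fun x y hxy => measure_mono (Ioi_subset_Ioi hxy))
  have mdens : Measurable fun x : ℝ =>
      if 0 < x then ν (Ioi x) / ENNReal.ofReal νbar else 0 :=
    Measurable.ite measurableSet_Ioi (mtail.div_const _) measurable_const
  have mE : Measurable fun x : ℝ => ENNReal.ofReal (Real.exp (-(α*x))) := by fun_prop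
  have hdens_ind : (fun x : ℝ => if 0 < x then ν (Ioi x) / ENNReal.ofReal νbar else 0)
      = (Ioi (0:ℝ)).indicator (fun x => ν (Ioi x) / ENNReal.ofReal νbar) := by
    ext x; simp [Set.indicator_apply, mem_Ioi]
  -- total mass computation
  have hmass : ∫⁻ x in Ioi (0:ℝ), ν (Ioi x) = ENNReal.ofReal νbar := by
    have t1 := tail_lintegral ν (fun _ => (1:ℝ)) continuous_const (fun _ => zero_le_one)
    simp only [ENNReal.ofReal_one, mul_one, intervalIntegral.integral_const, sub_zero,
      smul_eq_mul] at t1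
    rw [t1, ← ofReal_integral_eq_lintegral_ofReal hint
      (Filter.Eventually.mono (ae_restrict_mem measurableSet_Ioi) fun x hx => le_of_lt hx),
      hνbar]
  have hofνb : ENNReal.ofReal νbar ≠ 0 := (ENNReal.ofReal_pos.2 h0).ne'
  have hinv_ne_top : (ENNReal.ofReal νbar)⁻¹ ≠ ⊤ := by
    simp [ENNReal.inv_ne_top, hofνb]
  have hGmass : IsProbabilityMeasure G := by
    constructor
    rw [hG, withDensity_apply _ MeasurableSet.univ, Measure.restrict_univ, hdens_ind,
      lintegral_indicator measurableSet_Ioi]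
    simp_rw [div_eq_mul_inv]
    rw [lintegral_mul_const' _ _ hinv_ne_top, hmass,
      ENNReal.mul_inv_cancel hofνb ENNReal.ofReal_ne_top]
  haveI := hGmass
  -- the real integral I := ∫ (1 - e^{-αx}) dν on Ioi 0
  set I : ℝ := ∫ x in Ioi (0:ℝ), (1 - Real.exp (-(α * x))) ∂ν with hI
  have hae_pos : ∀ᵐ y ∂(ν.restrict (Ioi 0)), y ∈ Ioi (0:ℝ) :=
    ae_restrict_mem measurableSet_Ioi
  have hI_int : IntegrableOn (fun y => 1 - Real.exp (-(α * y))) (Ioi 0) ν := by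
    refine Integrable.mono (hint.const_mul α) ((continuous_const.sub (by continuity)).aestronglyMeasurable) ?_
    filter_upwards [hae_pos] with y hy
    have hy0 : (0:ℝ) < y := hy
    have h1e : Real.exp (-(α*y)) ≤ 1 := by
      rw [Real.exp_le_one_iff]; nlinarith
    have h2e : 1 - α*y ≤ Real.exp (-(α*y)) := by
      have := Real.add_one_le_exp (-(α*y)); linarith
    rw [Real.norm_eq_abs, Real.norm_eq_abs, abs_of_nonneg (by linarith),
      abs_of_nonneg (by positivity)]
    linarith
  have hI_nonneg : 0 ≤ I := by
    apply integral_nonneg_of_ae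
    filter_upwards [hae_pos] with y hy
    have hy0 : (0:ℝ) < y := hy
    have h1e : Real.exp (-(α*y)) ≤ 1 := by rw [Real.exp_le_one_iff]; nlinarith
    simp only [Pi.zero_apply]
    linarith
  have hI_lt : I < α * νbar := by
    have hdm : IntegrableOn (fun y => α * y - (1 - Real.exp (-(α * y)))) (Ioi 0) ν :=
      (hint.const_mul α).sub hI_int
    have hdnn : 0 ≤ᵐ[ν.restrict (Ioi 0)] fun y => α * y - (1 - Real.exp (-(α * y))) := by
      filter_upwards [hae_pos] with y hy
      have := Real.add_one_le_exp (-(α*y)); simp only [Pi.zero_apply]; linarith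
    have hdpos : 0 < ∫ y in Ioi (0:ℝ), (α * y - (1 - Real.exp (-(α * y)))) ∂ν := by
      rcases lt_or_eq_of_le (integral_nonneg_of_ae hdnn) with h | h
      · exact h
      · exfalso
        have hz := (integral_eq_zero_iff_of_nonneg_ae hdnn hdm).1 h.symm
        have hsub : Ioi (0:ℝ) ⊆ {y | (fun y => α * y - (1 - Real.exp (-(α * y)))) y ≠ 0} := by
          intro y hy
          have hy0 : (0:ℝ) < y := hy
          have := Real.add_one_lt_exp (x := -(α*y)) (by nlinarith)
          simp only [ne_eq, mem_setOf_eq]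
          intro hcontra; linarith
        have h0' : ν.restrict (Ioi 0) (Ioi 0) = 0 := by
          refine le_antisymm ?_ zero_le
          calc ν.restrict (Ioi 0) (Ioi 0)
              ≤ ν.restrict (Ioi 0) {y | (fun y => α * y - (1 - Real.exp (-(α * y)))) y ≠ 0} :=
                measure_mono hsub
            _ = 0 := by
                have hz' : ∀ᵐ y ∂(ν.restrict (Ioi 0)),
                    α * y - (1 - Real.exp (-(α * y))) = 0 := by
                  filter_upwards [hz] with y hy; simpa using hy
                exact ae_iff.1 hz'
        rw [Measure.restrict_apply measurableSet_Ioi, Set.inter_self] at h0'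
        have hres0 : ν.restrict (Ioi 0) = 0 := by
          apply Measure.measure_univ_eq_zero.1
          rw [Measure.restrict_apply MeasurableSet.univ, Set.univ_inter, h0']
        rw [hνbar] at h0
        rw [show (∫ x in Ioi (0:ℝ), x ∂ν) = ∫ x, x ∂(ν.restrict (Ioi 0)) from rfl,
          hres0] at h0
        simp at h0
    have hsplit : ∫ y in Ioi (0:ℝ), (α * y - (1 - Real.exp (-(α * y)))) ∂ν
        = α * νbar - I := by
      rw [integral_sub (hint.const_mul α) hI_int, integral_const_mul, ← hνbar]
    rw [hsplit] at hdpos; linarith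
  have hφpos : 0 < φ α := by rw [hφ α, ← hI]; nlinarith
  -- Laplace transform of G
  have hLG : ∫⁻ x, ENNReal.ofReal (Real.exp (-(α*x))) ∂G
      = ENNReal.ofReal (I / α / νbar) := by
    rw [hG, lintegral_withDensity_eq_lintegral_mul _ mdens mE]
    have : (fun x => ((fun x : ℝ => if 0 < x then ν (Ioi x) / ENNReal.ofReal νbar else 0) *
        fun x => ENNReal.ofReal (Real.exp (-(α*x)))) x)
        = (Ioi (0:ℝ)).indicator
            (fun x => ν (Ioi x) * ENNReal.ofReal (Real.exp (-(α*x))) * (ENNReal.ofReal νbar)⁻¹) := by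
      ext x
      simp only [Pi.mul_apply, Set.indicator_apply, mem_Ioi]
      by_cases hx : 0 < x
      · simp only [hx, if_true, div_eq_mul_inv]; ring
      · simp [hx]
    rw [this, lintegral_indicator measurableSet_Ioi,
      lintegral_mul_const' _ _ hinv_ne_top]
    have t2 := tail_lintegral ν (fun t => Real.exp (-(α*t)))
      (by fun_prop) (fun t => (Real.exp_pos _).le)
    rw [t2]
    have hconv : ∫⁻ y, ENNReal.ofReal (∫ t in (0:ℝ)..y, Real.exp (-(α*t)))
        ∂(ν.restrict (Ioi 0)) = ENNReal.ofReal (I / α) := by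
      simp_rw [expint α hα]
      rw [← ofReal_integral_eq_lintegral_ofReal]
      · congr 1
        rw [hI, ← integral_div]
      · exact hI_int.div_const α
      · filter_upwards [hae_pos] with y hy
        have hy0 : (0:ℝ) < y := hy
        have h1e : Real.exp (-(α*y)) ≤ 1 := by rw [Real.exp_le_one_iff]; nlinarith
        simp only [Pi.zero_apply]
        exact div_nonneg (by linarith) hα.le
    rw [hconv, ENNReal.ofReal_div_of_pos h0]
    rfl
  -- parameters
  set r : ℝ := I / α / νbar with hr
  have hr_nonneg : 0 ≤ r := div_nonneg (div_nonneg hI_nonneg hα.le) h0.le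
  have hρ_nonneg : 0 ≤ ρ := by rw [hρ]; positivity
  have hρ_lt : ρ < 1 := by rw [hρ]; rw [div_lt_one hc]; exact h1
  set s : ℝ := ρ * r with hs
  have hs_eq : 1 - s = φ α / (c * α) := by
    rw [hs, hρ, hr, hφ α, ← hI]
    field_simp
  have hs_nonneg : 0 ≤ s := mul_nonneg hρ_nonneg hr_nonneg
  have hs_lt : s < 1 := by
    have : 0 < φ α / (c * α) := div_pos hφpos (by positivity)
    linarith [hs_eq]
  -- Laplace transform of W
  have hLW : ∫⁻ x, ENNReal.ofReal (Real.exp (-(α*x))) ∂W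
      = ENNReal.ofReal (1 - ρ) * (ENNReal.ofReal (1 - s))⁻¹ := by
    rw [hW, lintegral_sum_measure]
    have hterm : ∀ n : ℕ, ∫⁻ x, ENNReal.ofReal (Real.exp (-(α*x)))
        ∂((ENNReal.ofReal ((1 - ρ) * ρ ^ n)) • convPow G n)
        = ENNReal.ofReal (1 - ρ) * (ENNReal.ofReal s) ^ n := by
      intro n
      rw [lintegral_smul_measure, lap_convPow α G n, hLG]
      rw [ENNReal.ofReal_mul (by linarith), ENNReal.ofReal_pow hρ_nonneg]
      rw [smul_eq_mul, mul_assoc, ← mul_pow, ← ENNReal.ofReal_mul hρ_nonneg, ← hs]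
    simp_rw [hterm]
    rw [ENNReal.tsum_mul_left, ENNReal.tsum_geometric]
    congr 1
    rw [← ENNReal.ofReal_one, ← ENNReal.ofReal_sub _ hs_nonneg]
  -- convert Bochner integral
  have hBoch : ∫ x, Real.exp (-(α * x)) ∂W
      = (∫⁻ x, ENNReal.ofReal (Real.exp (-(α*x))) ∂W).toReal := by
    rw [integral_eq_lintegral_of_nonneg_ae
      (Filter.Eventually.of_forall fun x => (Real.exp_pos _).le)
      (Continuous.aestronglyMeasurable (by fun_prop))]
  rw [hBoch, hLW, ENNReal.toReal_mul, ENNReal.toReal_ofReal (by linarith),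
    ENNReal.toReal_inv, ENNReal.toReal_ofReal (by linarith)]
  rw [hs_eq, hρ]
  rw [inv_div]
  field_simp
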